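/- Let p ≥ 1 be an integer, let a_1,…,a_p be nonnegative reals, and suppose x ∈ {−1, 1}^p satisfies Σ_{i=1}^p a_i x_i = (1/2)·Σ_{i=1}^p a_i. Then G(x, 0) = p + 100p². -/
import Mathlib


/-- `θ(x, β₀) = (max{0, x + β₀} − 1)² + (max{0, −x + β₀} − 1)²`. -/
noncomputable def thetaFn (x β₀ : ℝ) : ℝ :=
  (max 0 (x + β₀) - 1) ^ 2 + (max 0 (-x + β₀) - 1) ^ 2

/-- The objective of the (ReLU) reduction instance. -/
noncomputable def reluObj {p : ℕ} (a : Fin p → ℝ) (β : Fin p → ℝ) (β₀ : ℝ) : ℝ :=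
  (max 0 (∑ i, a i * β i + β₀) - (1 / 2) * ∑ i, a i) ^ 2
  + (max 0 (2 * ∑ i, a i * β i + β₀) - ∑ i, a i) ^ 2
  + ∑ j, thetaFn (β j) β₀
  + (max 0 β₀ + 10 * p) ^ 2

/-- if `a₁,…,a_p ≥ 0` and `x ∈ {−1,1}^p` satisfies
`∑ a_i x_i = ½ ∑ a_i`, then `G(x, 0) = p + 100 p²`. -/
theorem reluObj_eq_of_pmOne_solution (p : ℕ) (hp : 1 ≤ p)
    (a : Fin p → ℝ) (ha : ∀ i, 0 ≤ a i)
    (x : Fin p → ℝ) (hx : ∀ i, x i = -1 ∨ x i = 1)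
    (hsum : ∑ i, a i * x i = (1 / 2) * ∑ i, a i) :
    reluObj a x 0 = (p : ℝ) + 100 * (p : ℝ) ^ 2 := by
  have hS : 0 ≤ ∑ i, a i := Finset.sum_nonneg fun i _ => ha i
  have hθ : ∀ j, thetaFn (x j) 0 = 1 := by
    intro j
    rcases hx j with h | h <;> simp [thetaFn, h] <;> norm_num
  unfold reluObj
  rw [Finset.sum_congr rfl fun j _ => hθ j]
  rw [hsum]
  rw [add_zero, add_zero, max_eq_right (by linarith), max_eq_right (by linarith),
    max_eq_right le_rfl]
  simp
  ring
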